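/- (Algebraic Chern–Kuiper inequality) Let α : V × V → W be a symmetric flat bilinear form with dim V = n and dim W = p, let Γ ⊆ V be a subspace with the property that α|_{V × Γ} is flat and Δ_α ⊆ Γ. Then ν ≤ μ ≤ ν + p, where ν = dim Δ_α and μ = dim Γ, provided μ equals the dimension of the nullity of the curvature-like tensor R(X,Y,Z,T) = ⟨α(X,T),α(Y,Z)⟩ − ⟨α(X,Z),α(Y,T)⟩. Concretely: if Γ is the nullity of R, then dim Δ_α ≤ dim Γ ≤ dim Δ_α + dim W. -/

import Mathlib

open Module LinearMap RealInnerProductSpace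

set_option maxHeartbeats 1000000
set_option synthInstance.maxHeartbeats 400000

/-- Key lemma (regular element argument): there exists `z₀` such that for `x ∈ Γ`,
`α x z₀ = 0` forces `α x = 0`. -/
theorem chern_kuiper_key
    {V W : Type*} [AddCommGroup V] [Module ℝ V] [FiniteDimensional ℝ V]
    [NormedAddCommGroup W] [InnerProductSpace ℝ W] [FiniteDimensional ℝ W]
    (α : V →ₗ[ℝ] V →ₗ[ℝ] W) (Γ : Submodule ℝ V)
    (hflat : ∀ X ∈ Γ, ∀ Y Z T : V, ⟪α X T, α Y Z⟫ = ⟪α X Z, α Y T⟫) :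
    ∃ z0 : V, (∀ x : V, x ∈ Γ → α x z0 = 0 → α x = 0) := by
  set φ : V → (↥Γ →ₗ[ℝ] W) := fun z => (α.flip z).comp Γ.subtype with hφdef
  have hφ_apply : ∀ (z : V) (x : ↥Γ), φ z x = α (x : V) z := fun z x => rfl
  -- choose a maximizer of the rank
  obtain ⟨z0, hz0⟩ : ∃ z0 : V, ∀ z : V,
      finrank ℝ (range (φ z)) ≤ finrank ℝ (range (φ z0)) := by
    set S : Set ℕ := Set.range (fun z => finrank ℝ (range (φ z))) with hS
    have h1 : S.Nonempty := ⟨_, ⟨0, rfl⟩⟩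
    have h2 : BddAbove S := by
      refine ⟨finrank ℝ W, ?_⟩
      rintro n ⟨z, rfl⟩
      exact Submodule.finrank_le _
    obtain ⟨z0, hz0⟩ := Nat.sSup_mem h1 h2
    refine ⟨z0, fun z => ?_⟩
    have h3 : finrank ℝ (range (φ z)) ≤ sSup S := le_csSup h2 ⟨z, rfl⟩
    exact h3.trans_eq hz0.symm
  refine ⟨z0, fun x hx hx0 => ?_⟩
  ext t
  set w : W := α x t with hw
  set U0 : Submodule ℝ W := range (φ z0) with hU0
  -- the vector w is orthogonal to U0
  have hw_orth : w ∈ U0ᗮ := by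
    rw [Submodule.mem_orthogonal]
    rintro u ⟨y, rfl⟩
    rw [hφ_apply]
    rw [real_inner_comm]
    calc ⟪α x t, α (y : V) z0⟫ = ⟪α x z0, α (y : V) t⟫ := hflat x hx y z0 t
      _ = 0 := by rw [hx0]; simp
  set π := Submodule.orthogonalProjectionOnto U0 with hπ
  set B0 : ↥Γ →ₗ[ℝ] ↥U0 := (π : W →ₗ[ℝ] ↥U0).comp (φ z0) with hB0
  set B1 : ↥Γ →ₗ[ℝ] ↥U0 := (π : W →ₗ[ℝ] ↥U0).comp (φ t) with hB1
  have hB0surj : Function.Surjective B0 := by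
    intro u
    obtain ⟨y, hy⟩ := u.2
    refine ⟨y, ?_⟩
    have : B0 y = π (φ z0 y) := rfl
    rw [this, hy]
    exact Submodule.orthogonalProjectionOnto_mem_subspace_eq_self u
  obtain ⟨g, hg⟩ := B0.exists_rightInverse_of_surjective (range_eq_top.2 hB0surj)
  set K : ↥U0 →L[ℝ] ↥U0 := LinearMap.toContinuousLinearMap (B1 ∘ₗ g) with hK
  obtain ⟨s, hs_pos, hs_lt⟩ : ∃ s : ℝ, 0 < s ∧ ‖s‖ * ‖K‖ < 1 := by
    have h2 : (0:ℝ) < 2 * (1 + ‖K‖) := by positivity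
    refine ⟨(2 * (1 + ‖K‖))⁻¹, by positivity, ?_⟩
    rw [Real.norm_eq_abs, abs_of_pos (by positivity), ← div_eq_inv_mul, div_lt_one h2]
    nlinarith [norm_nonneg K]
  have hneg : ‖-(s • K)‖ < 1 := by
    have e : -(s • K) = (-s) • K := (neg_smul s K).symm
    rw [e]
    refine lt_of_le_of_lt (ContinuousLinearMap.opNorm_smul_le _ _) ?_
    rwa [norm_neg]
  set u : (↥U0 →L[ℝ] ↥U0)ˣ := Units.oneSub (-(s • K)) hneg with hu
  have huval : (u : ↥U0 →L[ℝ] ↥U0) = 1 + s • K := by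
    simp [hu, Units.oneSub, sub_neg_eq_add]
  set B' : ↥Γ →ₗ[ℝ] ↥U0 := B0 + s • B1 with hB'
  have hB'g : ∀ y : ↥U0, B' (g y) = (u : ↥U0 →L[ℝ] ↥U0) y := by
    intro y
    have h1 : B0 (g y) = y := LinearMap.congr_fun hg y
    have h2 : B1 (g y) = K y := by
      rw [hK]
      simp only [LinearMap.coe_toContinuousLinearMap', LinearMap.comp_apply]
    rw [hB', huval]
    simp only [LinearMap.add_apply, LinearMap.smul_apply, ContinuousLinearMap.add_apply,
      ContinuousLinearMap.smul_apply, ContinuousLinearMap.one_apply, h1, h2]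
  have hB'surj : Function.Surjective B' := by
    intro v
    refine ⟨g ((↑u⁻¹ : ↥U0 →L[ℝ] ↥U0) v), ?_⟩
    rw [hB'g]
    calc (u : ↥U0 →L[ℝ] ↥U0) ((↑u⁻¹ : ↥U0 →L[ℝ] ↥U0) v)
        = ((u * u⁻¹ : (↥U0 →L[ℝ] ↥U0)ˣ) : ↥U0 →L[ℝ] ↥U0) v := rfl
      _ = v := by rw [mul_inv_cancel]; simp
  set L' : ↥Γ →ₗ[ℝ] W := φ (z0 + s • t) with hL'
  have hL'B' : ∀ y : ↥Γ, π (L' y) = B' y := by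
    intro y
    have h1 : L' y = φ z0 y + s • φ t y := by
      simp only [hL', hφ_apply, map_add, map_smul]
    rw [h1, map_add, map_smul]
    rfl
  have hker : ker L' ≤ ker B' := by
    intro y hy
    rw [mem_ker] at hy ⊢
    rw [← hL'B', hy, map_zero]
  have hkeq : ker L' = ker B' := by
    refine Submodule.eq_of_le_of_finrank_le hker ?_
    have h1 := LinearMap.finrank_range_add_finrank_ker L'
    have h2 := LinearMap.finrank_range_add_finrank_ker B'
    have h3 : finrank ℝ (range L') ≤ finrank ℝ U0 := hz0 (z0 + s • t)
    have h4 : finrank ℝ (range B') = finrank ℝ ↥U0 := by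
      rw [range_eq_top.2 hB'surj, finrank_top]
    omega
  have hxmem : (⟨x, hx⟩ : ↥Γ) ∈ ker B' := by
    rw [mem_ker, ← hL'B']
    have h1 : L' (⟨x, hx⟩ : ↥Γ) = s • w := by
      simp only [hL', hφ_apply, map_add, map_smul, hx0, zero_add, hw]
    rw [h1, map_smul,
      Submodule.orthogonalProjectionOnto_apply_of_mem_orthogonal hw_orth, smul_zero]
  rw [← hkeq, mem_ker] at hxmem
  have h1 : L' (⟨x, hx⟩ : ↥Γ) = s • w := by
    simp only [hL', hφ_apply, map_add, map_smul, hx0, zero_add, hw]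
  rw [h1] at hxmem
  have hw0 : w = 0 := by
    rcases smul_eq_zero.1 hxmem with h | h
    · exact absurd h (ne_of_gt hs_pos)
    · exact h
  simpa [hw] using hw0

/-- Algebraic Chern–Kuiper inequalities: `ν ≤ μ ≤ ν + p` where `ν` is the dimension of the
nullity of `α`, `μ` the dimension of the nullity of its curvature tensor, `p = dim W`. -/
theorem chern_kuiper_inequalities
    {V W : Type*} [AddCommGroup V] [Module ℝ V] [FiniteDimensional ℝ V]
    [NormedAddCommGroup W] [InnerProductSpace ℝ W] [FiniteDimensional ℝ W]
    (α : V →ₗ[ℝ] V →ₗ[ℝ] W)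
    (hsymm : ∀ X Y : V, α X Y = α Y X)
    (Γ : Submodule ℝ V)
    (hΓ : ∀ X : V, X ∈ Γ ↔
      ∀ Y Z T : V, ⟪α X T, α Y Z⟫ - ⟪α X Z, α Y T⟫ = 0) :
    finrank ℝ (ker α) ≤ finrank ℝ Γ ∧
      finrank ℝ Γ ≤ finrank ℝ (ker α) + finrank ℝ W := by
  have hflat : ∀ X ∈ Γ, ∀ Y Z T : V, ⟪α X T, α Y Z⟫ = ⟪α X Z, α Y T⟫ :=
    fun X hX Y Z T => sub_eq_zero.1 ((hΓ X).1 hX Y Z T)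
  obtain ⟨z0, hkey⟩ := chern_kuiper_key α Γ hflat
  constructor
  · -- ker α ⊆ Γ
    apply Submodule.finrank_mono
    intro X hX
    rw [mem_ker] at hX
    rw [hΓ]
    intro Y Z T
    simp [hX]
  · set f : ↥Γ →ₗ[ℝ] W := (α.flip z0).comp Γ.subtype with hf
    have h1 := LinearMap.finrank_range_add_finrank_ker f
    have h2 : finrank ℝ (range f) ≤ finrank ℝ W := Submodule.finrank_le _
    have h3 : finrank ℝ (ker f) ≤ finrank ℝ (ker α) := by
      have hmem : ∀ y : ↥(ker f), ((y : ↥Γ) : V) ∈ ker α := by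
        intro y
        rw [mem_ker]
        exact hkey _ (y : ↥Γ).2 (y.2 : f (y : ↥Γ) = 0)
      set ψ : ↥(ker f) →ₗ[ℝ] ↥(ker α) :=
        (Γ.subtype.comp (ker f).subtype).codRestrict (ker α) hmem with hψ
      have hinj : Function.Injective ψ := by
        intro a b hab
        have h : (ψ a).val = (ψ b).val := congrArg Subtype.val hab
        exact Subtype.ext (Subtype.ext h)
      exact LinearMap.finrank_le_finrank_of_injective hinj
    omega
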